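/- Let λ > 0 and suppose u, v are C² on ℝ₊ × ℝ₊ and satisfy the Cauchy–Riemann-type system ∂_x u + ∂_t v = 0 and ∂_t u − ∂_x v = (2λ/x) v. Then for every p ∈ ((2λ+1)/(2λ+2), 1), the function F := (u² + v²)^{1/2} satisfies, on the open set where F > 0, the λ-subharmonicity inequality ∂_t²(F^p) + ∂_x²(F^p) + (2λ/x) ∂_x(F^p) ≥ 0. -/

import Mathlib

noncomputable section
open MeasureTheory Set Filter Topology

private lemma slice1 {f : ℝ → ℝ → ℝ} {t x : ℝ}
    (hf : DifferentiableAt ℝ (Function.uncurry f) (t, x)) :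
    HasDerivAt (fun a => f a x) (fderiv ℝ (Function.uncurry f) (t, x) (1, 0)) t := by
  have h4 := hf.hasFDerivAt.comp_hasDerivAt t ((hasDerivAt_id t).prodMk (hasDerivAt_const t x))
  have h5 : HasDerivAt (fun a => f a x) _ t := h4
  simpa using h5

private lemma slice2 {f : ℝ → ℝ → ℝ} {t x : ℝ}
    (hf : DifferentiableAt ℝ (Function.uncurry f) (t, x)) :
    HasDerivAt (fun a => f t a) (fderiv ℝ (Function.uncurry f) (t, x) (0, 1)) x := by
  have h4 := hf.hasFDerivAt.comp_hasDerivAt x ((hasDerivAt_const x t).prodMk (hasDerivAt_id x))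
  have h5 : HasDerivAt (fun a => f t a) _ x := h4
  simpa using h5

private lemma dslice1 {f : ℝ × ℝ → ℝ} {t x : ℝ}
    (hf : ContDiffAt ℝ 2 f (t, x)) (w : ℝ × ℝ) :
    HasDerivAt (fun a => fderiv ℝ f (a, x) w)
      (fderiv ℝ (fderiv ℝ f) (t, x) (1, 0) w) t := by
  have h1 : ContDiffAt ℝ 1 (fderiv ℝ f) (t, x) := hf.fderiv_right (by norm_num)
  have h2 := (h1.differentiableAt one_ne_zero).hasFDerivAt
  have h3 := h2.clm_apply (hasFDerivAt_const w (t, x))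
  have h4 := h3.comp_hasDerivAt t ((hasDerivAt_id t).prodMk (hasDerivAt_const t x))
  have h5 : HasDerivAt (fun a => fderiv ℝ f (a, x) w) _ t := h4
  simpa using h5

private lemma dslice2 {f : ℝ × ℝ → ℝ} {t x : ℝ}
    (hf : ContDiffAt ℝ 2 f (t, x)) (w : ℝ × ℝ) :
    HasDerivAt (fun a => fderiv ℝ f (t, a) w)
      (fderiv ℝ (fderiv ℝ f) (t, x) (0, 1) w) x := by
  have h1 : ContDiffAt ℝ 1 (fderiv ℝ f) (t, x) := hf.fderiv_right (by norm_num)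
  have h2 := (h1.differentiableAt one_ne_zero).hasFDerivAt
  have h3 := h2.clm_apply (hasFDerivAt_const w (t, x))
  have h4 := h3.comp_hasDerivAt x ((hasDerivAt_const x t).prodMk (hasDerivAt_id x))
  have h5 : HasDerivAt (fun a => fderiv ℝ f (t, a) w) _ x := h4
  simpa using h5

private lemma first_deriv_eq {p : ℝ} {f g : ℝ → ℝ} {t F1 G1 : ℝ}
    (hf : HasDerivAt f F1 t) (hg : HasDerivAt g G1 t)
    (hpos : 0 < f t ^ 2 + g t ^ 2) :
    deriv (fun s => Real.sqrt (f s ^ 2 + g s ^ 2) ^ p) t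
      = p / 2 * (f t ^ 2 + g t ^ 2) ^ (p / 2 - 1) * (2 * (f t * F1 + g t * G1)) := by
  have hfun : (fun s => Real.sqrt (f s ^ 2 + g s ^ 2) ^ p)
      = fun s => (f s ^ 2 + g s ^ 2) ^ (p / 2 : ℝ) := by
    funext s
    rw [Real.sqrt_eq_rpow, ← Real.rpow_mul (by positivity)]
    congr 1
    ring
  have hψ : HasDerivAt (fun s => f s ^ 2 + g s ^ 2) (2 * (f t * F1 + g t * G1)) t := by
    have h := (hf.pow 2).add (hg.pow 2)
    have h' : HasDerivAt (fun s => f s ^ 2 + g s ^ 2) _ t := h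
    convert h' using 1
    push_cast
    ring
  have hr := (Real.hasDerivAt_rpow_const (p := p / 2) (Or.inl hpos.ne')).comp t hψ
  rw [hfun]
  have h2 : deriv (fun s => (f s ^ 2 + g s ^ 2) ^ (p / 2 : ℝ)) t
      = p / 2 * (f t ^ 2 + g t ^ 2) ^ (p / 2 - 1) * (2 * (f t * F1 + g t * G1)) := by
    have := hr.deriv
    simpa [Function.comp_def, mul_assoc] using this
  rw [h2]

private lemma second_deriv_eq {p : ℝ} {f g F1 G1 : ℝ → ℝ} {t F2 G2 : ℝ}
    (hf : ∀ᶠ s in nhds t, HasDerivAt f (F1 s) s)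
    (hg : ∀ᶠ s in nhds t, HasDerivAt g (G1 s) s)
    (hF1 : HasDerivAt F1 F2 t) (hG1 : HasDerivAt G1 G2 t)
    (hpos : ∀ᶠ s in nhds t, 0 < f s ^ 2 + g s ^ 2) :
    deriv (fun s => deriv (fun s' => Real.sqrt (f s' ^ 2 + g s' ^ 2) ^ p) s) t
      = p / 2 * (f t ^ 2 + g t ^ 2) ^ (p / 2 - 2) *
          ((p / 2 - 1) * (2 * (f t * F1 t + g t * G1 t)) ^ 2
            + (f t ^ 2 + g t ^ 2)
              * (2 * (F1 t ^ 2 + G1 t ^ 2 + f t * F2 + g t * G2))) := by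
  have hft := hf.self_of_nhds
  have hgt := hg.self_of_nhds
  have hpt := hpos.self_of_nhds
  have hev : (fun s => deriv (fun s' => Real.sqrt (f s' ^ 2 + g s' ^ 2) ^ p) s)
      =ᶠ[nhds t] fun s =>
        p / 2 * (f s ^ 2 + g s ^ 2) ^ (p / 2 - 1) * (2 * (f s * F1 s + g s * G1 s)) := by
    filter_upwards [hf, hg, hpos] with s h1 h2 h3
    exact first_deriv_eq h1 h2 h3
  rw [hev.deriv_eq]
  have hψ : HasDerivAt (fun s => f s ^ 2 + g s ^ 2) (2 * (f t * F1 t + g t * G1 t)) t := by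
    have h := (hft.pow 2).add (hgt.pow 2)
    have h' : HasDerivAt (fun s => f s ^ 2 + g s ^ 2) _ t := h
    convert h' using 1
    push_cast
    ring
  have hA : HasDerivAt (fun s => (f s ^ 2 + g s ^ 2) ^ (p / 2 - 1 : ℝ))
      ((p / 2 - 1) * (f t ^ 2 + g t ^ 2) ^ (p / 2 - 2 : ℝ)
        * (2 * (f t * F1 t + g t * G1 t))) t := by
    have h := (Real.hasDerivAt_rpow_const (p := p / 2 - 1) (Or.inl hpt.ne')).comp t hψ
    have h2 : p / 2 - 1 - 1 = p / 2 - 2 := by ring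
    rw [h2] at h
    simpa [Function.comp_def, mul_assoc] using h
  have hB : HasDerivAt (fun s => 2 * (f s * F1 s + g s * G1 s))
      (2 * ((F1 t * F1 t + f t * F2) + (G1 t * G1 t + g t * G2))) t :=
    ((hft.mul hF1).add (hgt.mul hG1)).const_mul 2
  have hprod := (hA.const_mul (p / 2)).mul hB
  rw [HasDerivAt.deriv (f := fun s => p / 2 * (f s ^ 2 + g s ^ 2) ^ (p / 2 - 1)
    * (2 * (f s * F1 s + g s * G1 s))) hprod]
  have hsplit : (f t ^ 2 + g t ^ 2) ^ (p / 2 - 1 : ℝ)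
      = (f t ^ 2 + g t ^ 2) ^ (p / 2 - 2 : ℝ) * (f t ^ 2 + g t ^ 2) := by
    rw [show p / 2 - 1 = p / 2 - 2 + 1 by ring, Real.rpow_add_one hpt.ne']
  rw [hsplit]
  ring

set_option maxHeartbeats 2000000 in
private lemma key_ineq (lam p x u0 v0 a b utt vtt : ℝ) (hlam : 0 < lam) (hx : 0 < x)
    (hp1 : (2 * lam + 1) / (2 * lam + 2) < p) (hphi : 0 < u0 ^ 2 + v0 ^ 2) :
    0 ≤ ((p / 2 - 1) * (2 * (u0 * a + v0 * -b)) ^ 2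
          + (u0 ^ 2 + v0 ^ 2) * (2 * (a ^ 2 + (-b) ^ 2 + u0 * utt + v0 * vtt)))
        + ((p / 2 - 1) * (2 * (u0 * b + v0 * (a - 2 * lam / x * v0))) ^ 2
          + (u0 ^ 2 + v0 ^ 2) * (2 * (b ^ 2 + (a - 2 * lam / x * v0) ^ 2
              + u0 * (2 * lam / x * -b - utt)
              + v0 * (2 * lam / x ^ 2 * v0 - 2 * lam / x * (a - 2 * lam / x * v0) - vtt))))
        + 2 * lam / x
          * ((u0 ^ 2 + v0 ^ 2) * (2 * (u0 * b + v0 * (a - 2 * lam / x * v0)))) := by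
  have hp0 : 0 < p := lt_trans (by positivity) hp1
  have hpl : 0 < p * (2 * lam + 1) - 2 * lam := by
    have h22 : 0 < 2 * lam + 2 := by linarith
    rw [div_lt_iff₀ h22] at hp1
    nlinarith
  have key : lam * p * (u0 ^ 2 + v0 ^ 2) * x ^ 2 *
      (((p / 2 - 1) * (2 * (u0 * a + v0 * -b)) ^ 2
          + (u0 ^ 2 + v0 ^ 2) * (2 * (a ^ 2 + (-b) ^ 2 + u0 * utt + v0 * vtt)))
        + ((p / 2 - 1) * (2 * (u0 * b + v0 * (a - 2 * lam / x * v0))) ^ 2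
          + (u0 ^ 2 + v0 ^ 2) * (2 * (b ^ 2 + (a - 2 * lam / x * v0) ^ 2
              + u0 * (2 * lam / x * -b - utt)
              + v0 * (2 * lam / x ^ 2 * v0 - 2 * lam / x * (a - 2 * lam / x * v0) - vtt))))
        + 2 * lam / x
          * ((u0 ^ 2 + v0 ^ 2) * (2 * (u0 * b + v0 * (a - 2 * lam / x * v0)))))
      = 2 * lam * (x * (p * (u0 ^ 2 + v0 ^ 2) * a)
            - 2 * lam * v0 * ((p - 1) * v0 ^ 2 + u0 ^ 2)) ^ 2
        + 2 * lam * (x * (p * (u0 ^ 2 + v0 ^ 2) * b)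
            - 2 * lam * v0 * ((p - 2) * u0 * v0)) ^ 2
        + (p * (2 * lam + 1) - 2 * lam) * ((u0 ^ 2 + v0 ^ 2) * (2 * lam * v0)) ^ 2 := by
    field_simp
    ring
  nlinarith [key,
    mul_nonneg (by linarith : (0:ℝ) ≤ 2 * lam)
      (sq_nonneg (x * (p * (u0 ^ 2 + v0 ^ 2) * a) - 2 * lam * v0 * ((p - 1) * v0 ^ 2 + u0 ^ 2))),
    mul_nonneg (by linarith : (0:ℝ) ≤ 2 * lam)
      (sq_nonneg (x * (p * (u0 ^ 2 + v0 ^ 2) * b) - 2 * lam * v0 * ((p - 2) * u0 * v0))),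
    mul_nonneg hpl.le (sq_nonneg ((u0 ^ 2 + v0 ^ 2) * (2 * lam * v0))),
    mul_pos (mul_pos (mul_pos hlam hp0) hphi) (pow_pos hx 2)]

set_option maxHeartbeats 2000000

/-- If `(u,v)` is a `C²` solution of the Bessel Cauchy–Riemann system
`∂_x u + ∂_t v = 0`, `∂_t u − ∂_x v = (2λ/x) v` on `ℝ₊ × ℝ₊`, then for every
`p ∈ ((2λ+1)/(2λ+2), 1)` the function `F = (u² + v²)^{1/2}` satisfies
`∂_t²(F^p) + ∂_x²(F^p) + (2λ/x)∂_x(F^p) ≥ 0` wherever `F > 0`. -/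
theorem stmt15 (lam p : ℝ) (hlam : 0 < lam)
    (hp1 : (2 * lam + 1) / (2 * lam + 2) < p) (hp2 : p < 1)
    (u v : ℝ → ℝ → ℝ)
    (hu : ContDiffOn ℝ 2 (Function.uncurry u) (Ioi (0 : ℝ) ×ˢ Ioi (0 : ℝ)))
    (hv : ContDiffOn ℝ 2 (Function.uncurry v) (Ioi (0 : ℝ) ×ˢ Ioi (0 : ℝ)))
    (hCR1 : ∀ t x : ℝ, 0 < t → 0 < x →
      deriv (fun x' => u t x') x + deriv (fun t' => v t' x) t = 0)
    (hCR2 : ∀ t x : ℝ, 0 < t → 0 < x →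
      deriv (fun t' => u t' x) t - deriv (fun x' => v t x') x = (2 * lam / x) * v t x) :
    ∀ t x : ℝ, 0 < t → 0 < x → 0 < Real.sqrt ((u t x) ^ 2 + (v t x) ^ 2) →
      0 ≤ deriv (fun s => deriv
              (fun s' => (Real.sqrt ((u s' x) ^ 2 + (v s' x) ^ 2)) ^ p) s) t
          + deriv (fun w => deriv
              (fun w' => (Real.sqrt ((u t w') ^ 2 + (v t w') ^ 2)) ^ p) w) x
          + (2 * lam / x)
            * deriv (fun w => (Real.sqrt ((u t w) ^ 2 + (v t w) ^ 2)) ^ p) x := by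
  intro t x ht hx hF
  have hS : IsOpen (Ioi (0:ℝ) ×ˢ Ioi (0:ℝ)) := isOpen_Ioi.prod isOpen_Ioi
  have hzS : ((t, x) : ℝ × ℝ) ∈ Ioi (0:ℝ) ×ˢ Ioi (0:ℝ) := ⟨ht, hx⟩
  have hUc2 : ∀ z ∈ Ioi (0:ℝ) ×ˢ Ioi (0:ℝ), ContDiffAt ℝ 2 (Function.uncurry u) z :=
    fun z hz => hu.contDiffAt (hS.mem_nhds hz)
  have hVc2 : ∀ z ∈ Ioi (0:ℝ) ×ˢ Ioi (0:ℝ), ContDiffAt ℝ 2 (Function.uncurry v) z :=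
    fun z hz => hv.contDiffAt (hS.mem_nhds hz)
  have hUd : ∀ z ∈ Ioi (0:ℝ) ×ˢ Ioi (0:ℝ), DifferentiableAt ℝ (Function.uncurry u) z :=
    fun z hz => (hUc2 z hz).differentiableAt (by norm_num)
  have hVd : ∀ z ∈ Ioi (0:ℝ) ×ˢ Ioi (0:ℝ), DifferentiableAt ℝ (Function.uncurry v) z :=
    fun z hz => (hVc2 z hz).differentiableAt (by norm_num)
  have hφ : 0 < (u t x) ^ 2 + (v t x) ^ 2 := Real.sqrt_pos.mp hF
  -- open neighbourhood where u²+v² > 0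
  have hcont : ContinuousOn
      (fun z : ℝ × ℝ => (Function.uncurry u z) ^ 2 + (Function.uncurry v z) ^ 2)
      (Ioi (0:ℝ) ×ˢ Ioi (0:ℝ)) :=
    (hu.continuousOn.pow 2).add (hv.continuousOn.pow 2)
  have hS' : IsOpen ((Ioi (0:ℝ) ×ˢ Ioi (0:ℝ)) ∩
      (fun z : ℝ × ℝ => (Function.uncurry u z) ^ 2 + (Function.uncurry v z) ^ 2) ⁻¹'
        (Ioi 0)) := hcont.isOpen_inter_preimage hS isOpen_Ioi
  have hzS' : ((t, x) : ℝ × ℝ) ∈ (Ioi (0:ℝ) ×ˢ Ioi (0:ℝ)) ∩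
      (fun z : ℝ × ℝ => (Function.uncurry u z) ^ 2 + (Function.uncurry v z) ^ 2) ⁻¹'
        (Ioi 0) := ⟨hzS, by simpa [Function.uncurry] using hφ⟩
  have hmemt : ∀ᶠ s in nhds t, ((s, x) : ℝ × ℝ) ∈ (Ioi (0:ℝ) ×ˢ Ioi (0:ℝ)) ∩
      (fun z : ℝ × ℝ => (Function.uncurry u z) ^ 2 + (Function.uncurry v z) ^ 2) ⁻¹'
        (Ioi 0) := by
    have hc : ContinuousAt (fun s : ℝ => ((s, x) : ℝ × ℝ)) t :=
      (continuous_id.prodMk continuous_const).continuousAt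
    exact hc.preimage_mem_nhds (hS'.mem_nhds hzS')
  have hmemx : ∀ᶠ w in nhds x, ((t, w) : ℝ × ℝ) ∈ (Ioi (0:ℝ) ×ˢ Ioi (0:ℝ)) ∩
      (fun z : ℝ × ℝ => (Function.uncurry u z) ^ 2 + (Function.uncurry v z) ^ 2) ⁻¹'
        (Ioi 0) := by
    have hc : ContinuousAt (fun w : ℝ => ((t, w) : ℝ × ℝ)) x :=
      (continuous_const.prodMk continuous_id).continuousAt
    exact hc.preimage_mem_nhds (hS'.mem_nhds hzS')
  -- eventual HasDerivAt facts, t-direction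
  have hft : ∀ᶠ s in nhds t, HasDerivAt (fun s' => u s' x)
      ((fun s => fderiv ℝ (Function.uncurry u) (s, x) (1, 0)) s) s := by
    filter_upwards [hmemt] with s hs
    exact slice1 (hUd _ hs.1)
  have hgt : ∀ᶠ s in nhds t, HasDerivAt (fun s' => v s' x)
      ((fun s => fderiv ℝ (Function.uncurry v) (s, x) (1, 0)) s) s := by
    filter_upwards [hmemt] with s hs
    exact slice1 (hVd _ hs.1)
  have hpost : ∀ᶠ s in nhds t, 0 < (u s x) ^ 2 + (v s x) ^ 2 := by
    filter_upwards [hmemt] with s hs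
    simpa [Function.uncurry] using hs.2
  have hF1t : HasDerivAt (fun s => fderiv ℝ (Function.uncurry u) (s, x) (1, 0))
      (fderiv ℝ (fderiv ℝ (Function.uncurry u)) (t, x) (1, 0) (1, 0)) t :=
    dslice1 (hUc2 _ hzS) (1, 0)
  have hG1t : HasDerivAt (fun s => fderiv ℝ (Function.uncurry v) (s, x) (1, 0))
      (fderiv ℝ (fderiv ℝ (Function.uncurry v)) (t, x) (1, 0) (1, 0)) t :=
    dslice1 (hVc2 _ hzS) (1, 0)
  -- eventual HasDerivAt facts, x-direction
  have hfx : ∀ᶠ w in nhds x, HasDerivAt (fun w' => u t w')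
      ((fun w => fderiv ℝ (Function.uncurry u) (t, w) (0, 1)) w) w := by
    filter_upwards [hmemx] with w hw
    exact slice2 (hUd _ hw.1)
  have hgx : ∀ᶠ w in nhds x, HasDerivAt (fun w' => v t w')
      ((fun w => fderiv ℝ (Function.uncurry v) (t, w) (0, 1)) w) w := by
    filter_upwards [hmemx] with w hw
    exact slice2 (hVd _ hw.1)
  have hposx : ∀ᶠ w in nhds x, 0 < (u t w) ^ 2 + (v t w) ^ 2 := by
    filter_upwards [hmemx] with w hw
    simpa [Function.uncurry] using hw.2
  have hF1x : HasDerivAt (fun w => fderiv ℝ (Function.uncurry u) (t, w) (0, 1))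
      (fderiv ℝ (fderiv ℝ (Function.uncurry u)) (t, x) (0, 1) (0, 1)) x :=
    dslice2 (hUc2 _ hzS) (0, 1)
  have hG1x : HasDerivAt (fun w => fderiv ℝ (Function.uncurry v) (t, w) (0, 1))
      (fderiv ℝ (fderiv ℝ (Function.uncurry v)) (t, x) (0, 1) (0, 1)) x :=
    dslice2 (hVc2 _ hzS) (0, 1)
  -- the three derivative computations
  have hTt := second_deriv_eq (p := p) hft hgt hF1t hG1t hpost
  have hTx := second_deriv_eq (p := p) hfx hgx hF1x hG1x hposx
  have hTd := first_deriv_eq (p := p) (slice2 (hUd _ hzS)) (slice2 (hVd _ hzS)) hφ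
  -- pointwise CR relations
  have hCR1' : fderiv ℝ (Function.uncurry u) (t, x) (0, 1)
      + fderiv ℝ (Function.uncurry v) (t, x) (1, 0) = 0 := by
    have h := hCR1 t x ht hx
    rwa [(slice2 (hUd _ hzS)).deriv, (slice1 (hVd _ hzS)).deriv] at h
  have hCR2' : fderiv ℝ (Function.uncurry u) (t, x) (1, 0)
      - fderiv ℝ (Function.uncurry v) (t, x) (0, 1) = 2 * lam / x * v t x := by
    have h := hCR2 t x ht hx
    rwa [(slice1 (hUd _ hzS)).deriv, (slice2 (hVd _ hzS)).deriv] at h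
  -- differentiated CR relations
  have hE1t : fderiv ℝ (fderiv ℝ (Function.uncurry u)) (t, x) (1, 0) (0, 1)
      + fderiv ℝ (fderiv ℝ (Function.uncurry v)) (t, x) (1, 0) (1, 0) = 0 := by
    have hev : (fun s => fderiv ℝ (Function.uncurry u) (s, x) (0, 1)
        + fderiv ℝ (Function.uncurry v) (s, x) (1, 0)) =ᶠ[nhds t] (fun _ => 0) := by
      filter_upwards [hmemt] with s hs
      have h := hCR1 s x hs.1.1 hx
      rwa [(slice2 (hUd _ hs.1)).deriv, (slice1 (hVd _ hs.1)).deriv] at h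
    have hder := (dslice1 (hUc2 _ hzS) (0, 1)).add (dslice1 (hVc2 _ hzS) (1, 0))
    have h0 : HasDerivAt (fun s => fderiv ℝ (Function.uncurry u) (s, x) (0, 1)
        + fderiv ℝ (Function.uncurry v) (s, x) (1, 0)) 0 t :=
      (hasDerivAt_const t (0:ℝ)).congr_of_eventuallyEq hev
    exact hder.unique h0
  have hE1x : fderiv ℝ (fderiv ℝ (Function.uncurry u)) (t, x) (0, 1) (0, 1)
      + fderiv ℝ (fderiv ℝ (Function.uncurry v)) (t, x) (0, 1) (1, 0) = 0 := by
    have hev : (fun w => fderiv ℝ (Function.uncurry u) (t, w) (0, 1)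
        + fderiv ℝ (Function.uncurry v) (t, w) (1, 0)) =ᶠ[nhds x] (fun _ => 0) := by
      filter_upwards [hmemx] with w hw
      have h := hCR1 t w ht hw.1.2
      rwa [(slice2 (hUd _ hw.1)).deriv, (slice1 (hVd _ hw.1)).deriv] at h
    have hder := (dslice2 (hUc2 _ hzS) (0, 1)).add (dslice2 (hVc2 _ hzS) (1, 0))
    have h0 : HasDerivAt (fun w => fderiv ℝ (Function.uncurry u) (t, w) (0, 1)
        + fderiv ℝ (Function.uncurry v) (t, w) (1, 0)) 0 x :=
      (hasDerivAt_const x (0:ℝ)).congr_of_eventuallyEq hev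
    exact hder.unique h0
  have hE2t : fderiv ℝ (fderiv ℝ (Function.uncurry u)) (t, x) (1, 0) (1, 0)
      - fderiv ℝ (fderiv ℝ (Function.uncurry v)) (t, x) (1, 0) (0, 1)
      - 2 * lam / x * fderiv ℝ (Function.uncurry v) (t, x) (1, 0) = 0 := by
    have hev : (fun s => fderiv ℝ (Function.uncurry u) (s, x) (1, 0)
        - fderiv ℝ (Function.uncurry v) (s, x) (0, 1)
        - 2 * lam / x * v s x) =ᶠ[nhds t] (fun _ => 0) := by
      filter_upwards [hmemt] with s hs
      have h := hCR2 s x hs.1.1 hx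
      rw [(slice1 (hUd _ hs.1)).deriv, (slice2 (hVd _ hs.1)).deriv] at h
      linarith
    have hder := ((dslice1 (hUc2 _ hzS) (1, 0)).sub (dslice1 (hVc2 _ hzS) (0, 1))).sub
      ((slice1 (hVd _ hzS)).const_mul (2 * lam / x))
    have h0 : HasDerivAt (fun s => fderiv ℝ (Function.uncurry u) (s, x) (1, 0)
        - fderiv ℝ (Function.uncurry v) (s, x) (0, 1)
        - 2 * lam / x * v s x) 0 t :=
      (hasDerivAt_const t (0:ℝ)).congr_of_eventuallyEq hev
    exact hder.unique h0
  have hq : HasDerivAt (fun w : ℝ => 2 * lam / w) (-(2 * lam / x ^ 2)) x := by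
    have h := (hasDerivAt_inv (ne_of_gt hx)).const_mul (2 * lam)
    simpa [div_eq_mul_inv, mul_neg] using h
  have hE2x : fderiv ℝ (fderiv ℝ (Function.uncurry u)) (t, x) (0, 1) (1, 0)
      - fderiv ℝ (fderiv ℝ (Function.uncurry v)) (t, x) (0, 1) (0, 1)
      - (-(2 * lam / x ^ 2) * v t x
          + 2 * lam / x * fderiv ℝ (Function.uncurry v) (t, x) (0, 1)) = 0 := by
    have hev : (fun w => fderiv ℝ (Function.uncurry u) (t, w) (1, 0)
        - fderiv ℝ (Function.uncurry v) (t, w) (0, 1)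
        - 2 * lam / w * v t w) =ᶠ[nhds x] (fun _ => 0) := by
      filter_upwards [hmemx] with w hw
      have h := hCR2 t w ht hw.1.2
      rw [(slice1 (hUd _ hw.1)).deriv, (slice2 (hVd _ hw.1)).deriv] at h
      linarith
    have hder := ((dslice2 (hUc2 _ hzS) (1, 0)).sub (dslice2 (hVc2 _ hzS) (0, 1))).sub
      (hq.mul (slice2 (hVd _ hzS)))
    have h0 : HasDerivAt (fun w => fderiv ℝ (Function.uncurry u) (t, w) (1, 0)
        - fderiv ℝ (Function.uncurry v) (t, w) (0, 1)
        - 2 * lam / w * v t w) 0 x :=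
      (hasDerivAt_const x (0:ℝ)).congr_of_eventuallyEq hev
    exact hder.unique h0
  -- symmetry of second derivatives
  have hsymU : fderiv ℝ (fderiv ℝ (Function.uncurry u)) (t, x) (0, 1) (1, 0)
      = fderiv ℝ (fderiv ℝ (Function.uncurry u)) (t, x) (1, 0) (0, 1) :=
    ((hUc2 _ hzS).isSymmSndFDerivAt (by norm_num)) (0, 1) (1, 0)
  have hsymV : fderiv ℝ (fderiv ℝ (Function.uncurry v)) (t, x) (0, 1) (1, 0)
      = fderiv ℝ (fderiv ℝ (Function.uncurry v)) (t, x) (1, 0) (0, 1) :=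
    ((hVc2 _ hzS).isSymmSndFDerivAt (by norm_num)) (0, 1) (1, 0)
  -- rewrite the goal
  rw [hTt, hTx, hTd]
  set u0 := u t x with hu0
  set v0 := v t x with hv0
  set ua := fderiv ℝ (Function.uncurry u) (t, x) (1, 0) with hua
  set ub := fderiv ℝ (Function.uncurry u) (t, x) (0, 1) with hub
  set vt' := fderiv ℝ (Function.uncurry v) (t, x) (1, 0) with hvt'
  set vx' := fderiv ℝ (Function.uncurry v) (t, x) (0, 1) with hvx'
  set utt := fderiv ℝ (fderiv ℝ (Function.uncurry u)) (t, x) (1, 0) (1, 0) with hutt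
  set utx := fderiv ℝ (fderiv ℝ (Function.uncurry u)) (t, x) (1, 0) (0, 1) with hutx
  set uxt := fderiv ℝ (fderiv ℝ (Function.uncurry u)) (t, x) (0, 1) (1, 0) with huxt
  set uxx := fderiv ℝ (fderiv ℝ (Function.uncurry u)) (t, x) (0, 1) (0, 1) with huxx
  set vtt := fderiv ℝ (fderiv ℝ (Function.uncurry v)) (t, x) (1, 0) (1, 0) with hvtt
  set vtx := fderiv ℝ (fderiv ℝ (Function.uncurry v)) (t, x) (1, 0) (0, 1) with hvtx
  set vxt := fderiv ℝ (fderiv ℝ (Function.uncurry v)) (t, x) (0, 1) (1, 0) with hvxt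
  set vxx := fderiv ℝ (fderiv ℝ (Function.uncurry v)) (t, x) (0, 1) (0, 1) with hvxx
  have h1 : vt' = -ub := by linear_combination hCR1'
  have h2 : vx' = ua - 2 * lam / x * v0 := by linear_combination -hCR2'
  have h3 : uxx = 2 * lam / x * vt' - utt := by linear_combination hE2t + hE1x - hsymV
  have h4 : vxx = 2 * lam / x ^ 2 * v0 - 2 * lam / x * vx' - vtt := by
    have e1 : utx = -vtt := by linear_combination hE1t
    linear_combination -hE2x + hsymU + e1
  have hsplit : (u0 ^ 2 + v0 ^ 2) ^ (p / 2 - 1 : ℝ)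
      = (u0 ^ 2 + v0 ^ 2) ^ (p / 2 - 2 : ℝ) * (u0 ^ 2 + v0 ^ 2) := by
    rw [show p / 2 - 1 = p / 2 - 2 + 1 by ring, Real.rpow_add_one (ne_of_gt hφ)]
  rw [hsplit, h3, h4, h2, h1]
  have hp0 : 0 < p := lt_trans (by positivity) hp1
  have hR : (0:ℝ) < (u0 ^ 2 + v0 ^ 2) ^ (p / 2 - 2 : ℝ) := Real.rpow_pos_of_pos hφ _
  have hk := key_ineq lam p x u0 v0 ua ub utt vtt hlam hx hp1 hφ
  have hfinal := mul_nonneg (mul_nonneg (by linarith : (0:ℝ) ≤ p / 2) hR.le) hk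
  have hfinal' : (0:ℝ) ≤ _ := hfinal
  convert hfinal' using 1
  ring
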